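/- For 0 ≤ r ≤ ⌊n/2⌋, the number of 321-avoiding involutions z in S_n satisfying z(i) > i for all i ∈ [r] equals C(n−r, ⌈n/2⌉). -/

import Mathlib

open Finset

namespace Stmt14

/-- Paths of length `m` encoded by their up-step sets `S ⊆ range m`:
prefix sums nonneg (`t ≤ 2 * #(S ∩ range t)` for all `t ≤ m`) and
total sum `≥ r` (`m + r ≤ 2 * #S`). -/
def PF (m r : ℕ) : Finset (Finset ℕ) :=
  (Finset.range m).powerset.filter fun S =>
    (∀ t ≤ m, t ≤ 2 * (S ∩ Finset.range t).card) ∧ m + r ≤ 2 * S.card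

lemma mem_PF {m r : ℕ} {S : Finset ℕ} :
    S ∈ PF m r ↔ S ⊆ Finset.range m ∧
      (∀ t ≤ m, t ≤ 2 * (S ∩ Finset.range t).card) ∧ m + r ≤ 2 * S.card := by
  simp [PF, and_assoc]

lemma PF_succ (m r : ℕ) :
    PF (m+1) r = PF m (r+1) ∪ (PF m (r-1)).image (insert m) := by
  ext S
  simp only [mem_union, mem_image]
  constructor
  · intro hS
    rw [mem_PF] at hS
    obtain ⟨hsub, hpre, htot⟩ := hS
    by_cases hm : m ∈ S
    · right
      refine ⟨S.erase m, ?_, ?_⟩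
      · rw [mem_PF]
        have hsub' : S.erase m ⊆ Finset.range m := by
          intro x hx
          have hx1 := mem_of_mem_erase hx
          have hx2 := ne_of_mem_erase hx
          have := hsub hx1
          simp only [mem_range] at this ⊢
          omega
        have hcard : S.card = (S.erase m).card + 1 := by
          rw [card_erase_of_mem hm]
          have : 0 < S.card := card_pos.2 ⟨m, hm⟩
          omega
        have hint : ∀ t ≤ m, S ∩ Finset.range t = S.erase m ∩ Finset.range t := by
          intro t ht
          ext x
          simp only [mem_inter, mem_erase, mem_range]
          constructor
          · rintro ⟨h1, h2⟩; exact ⟨⟨by omega, h1⟩, h2⟩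
          · rintro ⟨⟨_, h1⟩, h2⟩; exact ⟨h1, h2⟩
        refine ⟨hsub', ?_, ?_⟩
        · intro t ht
          rw [← hint t ht]; exact hpre t (by omega)
        · -- m + (r-1) ≤ 2 * #(S.erase m)
          have h1 := htot
          have h2 := hpre m (by omega)
          rw [hint m le_rfl] at h2
          have h3 : S.erase m ∩ Finset.range m = S.erase m := inter_eq_left.2 hsub'
          rw [h3] at h2
          omega
      · exact insert_erase hm
    · left
      rw [mem_PF]
      have hsub' : S ⊆ Finset.range m := by
        intro x hx
        have := hsub hx
        simp only [mem_range] at this ⊢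
        rcases Nat.lt_succ_iff_lt_or_eq.1 this with h | h
        · exact h
        · exact absurd (h ▸ hx) hm
      exact ⟨hsub', fun t ht => hpre t (by omega), by omega⟩
  · rintro (hS | ⟨S', hS', rfl⟩)
    · rw [mem_PF] at hS ⊢
      obtain ⟨hsub, hpre, htot⟩ := hS
      have hsub' : S ⊆ Finset.range (m+1) :=
        hsub.trans (by intro x; simp only [mem_range]; omega)
      refine ⟨hsub', ?_, by omega⟩
      intro t ht
      rcases Nat.lt_succ_iff_lt_or_eq.1 (Nat.lt_succ_of_le ht) with h | h
      · exact hpre t (by omega)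
      · subst h
        have : S ∩ Finset.range (m+1) = S := inter_eq_left.2 hsub'
        rw [this]
        have h2 := hpre m le_rfl
        have : S ∩ Finset.range m = S := inter_eq_left.2 hsub
        omega
    · rw [mem_PF] at hS' ⊢
      obtain ⟨hsub, hpre, htot⟩ := hS'
      have hm : m ∉ S' := fun h => by simpa using hsub h
      have hcard : (insert m S').card = S'.card + 1 := card_insert_of_notMem hm
      have hint : ∀ t ≤ m, insert m S' ∩ Finset.range t = S' ∩ Finset.range t := by
        intro t ht
        ext x
        simp only [mem_inter, mem_insert, mem_range]
        constructor
        · rintro ⟨h1 | h1, h2⟩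
          · omega
          · exact ⟨h1, h2⟩
        · rintro ⟨h1, h2⟩; exact ⟨Or.inr h1, h2⟩
      have hpm := hpre m le_rfl
      have hSm : S' ∩ Finset.range m = S' := inter_eq_left.2 hsub
      refine ⟨?_, ?_, by omega⟩
      · intro x hx
        simp only [mem_insert] at hx
        rcases hx with rfl | hx
        · simp
        · have := hsub hx; simp only [mem_range] at this ⊢; omega
      · intro t ht
        rcases Nat.lt_succ_iff_lt_or_eq.1 (Nat.lt_succ_of_le ht) with h | h
        · rw [hint t (by omega)]
          exact hpre t (by omega)
        · subst h
          have : insert m S' ∩ Finset.range (m+1) = insert m S' :=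
            inter_eq_left.2 (by
              intro x hx
              simp only [mem_insert] at hx
              rcases hx with rfl | hx
              · simp
              · have := hsub hx; simp only [mem_range] at this ⊢; omega)
          rw [this, hcard]
          omega

theorem card_PF (m : ℕ) : ∀ r, (PF m r).card = Nat.choose m ((m + r + 1)/2) := by
  induction m with
  | zero =>
    intro r
    rcases Nat.eq_zero_or_pos r with rfl | hr
    · have h : PF 0 0 = {∅} := by
        ext S
        rw [mem_PF]
        simp only [Finset.range_zero, Finset.subset_empty, Finset.mem_singleton]
        constructor
        · rintro ⟨rfl, -, -⟩; rfl
        · rintro rfl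
          refine ⟨rfl, ?_, by simp⟩
          intro t ht
          interval_cases t
          simp
      rw [h]
      simp
    · have h : PF 0 r = ∅ := by
        ext S
        rw [mem_PF]
        simp only [Finset.range_zero, Finset.subset_empty, Finset.notMem_empty, iff_false,
          not_and]
        rintro rfl h2
        simp only [Finset.card_empty]
        omega
      rw [h]
      have h2 : 0 < (0 + r + 1)/2 := by omega
      rw [Nat.choose_eq_zero_of_lt h2]
      rfl
  | succ m ih =>
    intro r
    rw [PF_succ]
    have hdisj : Disjoint (PF m (r+1)) ((PF m (r-1)).image (insert m)) := by
      rw [Finset.disjoint_left]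
      intro S hS hS2
      obtain ⟨S', hS', rfl⟩ := Finset.mem_image.1 hS2
      rw [mem_PF] at hS
      have := hS.1 (mem_insert_self m S')
      simp at this
    rw [card_union_of_disjoint hdisj, Finset.card_image_of_injOn, ih, ih]
    · -- arithmetic
      have pascal : ∀ k, Nat.choose (m+1) (k+1) = Nat.choose m k + Nat.choose m (k+1) :=
        fun k => Nat.choose_succ_succ m k
      rcases Nat.eq_zero_or_pos r with rfl | hrpos
      · -- r = 0
        have h1 : (m + 0 + 1 + 1)/2 = m/2 + 1 := by omega
        have h2 : (m + (0+1) + 1)/2 = m/2 + 1 := by omega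
        have h3 : (m + (0-1) + 1)/2 = (m+1)/2 := by norm_num
        simp only [h1, h2, h3]
        have hsymm : Nat.choose m ((m+1)/2) = Nat.choose m (m/2) := by
          have hd : m - (m+1)/2 = m/2 := by omega
          rw [← hd, Nat.choose_symm (by omega)]
        rw [hsymm, pascal (m/2)]
        ring
      · have h1 : (m + 1 + r + 1)/2 = (m+r)/2 + 1 := by omega
        have h2 : (m + (r+1) + 1)/2 = (m+r)/2 + 1 := by omega
        have h3 : (m + (r-1) + 1)/2 = (m+r)/2 := by omega
        simp only [h1, h2, h3]
        rw [pascal ((m+r)/2)]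
        ring
    · intro S hS T hT h
      simp only [Finset.mem_coe] at hS hT
      have hmS : m ∉ S := fun hc => by
        rw [mem_PF] at hS; simpa using hS.1 hc
      have hmT : m ∉ T := fun hc => by
        rw [mem_PF] at hT; simpa using hT.1 hc
      have := congrArg (Finset.erase · m) h
      simpa [Finset.erase_insert hmS, Finset.erase_insert hmT] using this


/-- Two strictly monotone surjections from `A` onto `B` coincide. -/
lemma strictMonoOn_unique {α : Type*} [LinearOrder α] (A : Finset α) :
    ∀ (B : Finset α) (f g : α → α),
    (∀ a ∈ A, f a ∈ B) → (∀ a ∈ A, g a ∈ B) →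
    (∀ a ∈ A, ∀ b ∈ A, a < b → f a < f b) →
    (∀ a ∈ A, ∀ b ∈ A, a < b → g a < g b) →
    (∀ b ∈ B, ∃ a ∈ A, f a = b) → (∀ b ∈ B, ∃ a ∈ A, g a = b) →
    ∀ a ∈ A, f a = g a := by
  induction A using Finset.strongInductionOn with
  | _ A ih =>
    intro B f g hfA hgA hfm hgm hfs hgs
    rcases A.eq_empty_or_nonempty with rfl | hA
    · intro a ha; simp at ha
    have hB : B.Nonempty := ⟨f (A.max' hA), hfA _ (A.max'_mem hA)⟩
    set a := A.max' hA with ha_def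
    have haA : a ∈ A := A.max'_mem hA
    have key : ∀ (h : α → α), (∀ x ∈ A, h x ∈ B) →
        (∀ x ∈ A, ∀ y ∈ A, x < y → h x < h y) →
        (∀ b ∈ B, ∃ x ∈ A, h x = b) → h a = B.max' hB := by
      intro h hhA hhm hhs
      have le1 : h a ≤ B.max' hB := B.le_max' _ (hhA a haA)
      obtain ⟨a', ha', hfa'⟩ := hhs (B.max' hB) (B.max'_mem hB)
      have hle : a' ≤ a := A.le_max' a' ha'
      rcases eq_or_lt_of_le hle with heq | hlt
      · rw [← heq]; exact hfa'
      · exfalso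
        have := hhm a' ha' a haA hlt
        rw [hfa'] at this
        exact absurd le1 (not_le.2 this)
    have hfa : f a = B.max' hB := key f hfA hfm hfs
    have hga : g a = B.max' hB := key g hgA hgm hgs
    intro x hx
    rcases eq_or_ne x a with rfl | hxa
    · rw [hfa, hga]
    have hxe : x ∈ A.erase a := Finset.mem_erase.2 ⟨hxa, hx⟩
    have hxlt : x < a := lt_of_le_of_ne (A.le_max' x hx) hxa
    refine ih (A.erase a) (Finset.erase_ssubset haA) (B.erase (B.max' hB)) f g
      ?_ ?_ ?_ ?_ ?_ ?_ x hxe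
    · intro y hy
      have hy1 := Finset.mem_of_mem_erase hy
      have hylt : y < a := lt_of_le_of_ne (A.le_max' y hy1) (Finset.ne_of_mem_erase hy)
      exact Finset.mem_erase.2 ⟨by rw [← hfa]; exact ne_of_lt (hfm y hy1 a haA hylt), hfA y hy1⟩
    · intro y hy
      have hy1 := Finset.mem_of_mem_erase hy
      have hylt : y < a := lt_of_le_of_ne (A.le_max' y hy1) (Finset.ne_of_mem_erase hy)
      exact Finset.mem_erase.2 ⟨by rw [← hga]; exact ne_of_lt (hgm y hy1 a haA hylt), hgA y hy1⟩
    · intro u hu v hv huv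
      exact hfm u (Finset.mem_of_mem_erase hu) v (Finset.mem_of_mem_erase hv) huv
    · intro u hu v hv huv
      exact hgm u (Finset.mem_of_mem_erase hu) v (Finset.mem_of_mem_erase hv) huv
    · intro b hb
      obtain ⟨a', ha', hfa'⟩ := hfs b (Finset.mem_of_mem_erase hb)
      refine ⟨a', Finset.mem_erase.2 ⟨?_, ha'⟩, hfa'⟩
      rintro rfl
      rw [hfa] at hfa'
      exact (Finset.ne_of_mem_erase hb) hfa'.symm
    · intro b hb
      obtain ⟨a', ha', hga'⟩ := hgs b (Finset.mem_of_mem_erase hb)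
      refine ⟨a', Finset.mem_erase.2 ⟨?_, ha'⟩, hga'⟩
      rintro rfl
      rw [hga] at hga'
      exact (Finset.ne_of_mem_erase hb) hga'.symm

section InvolLemmas

variable {n : ℕ} (z : Equiv.Perm (Fin n))

/-- count of excedances below p -/
def cntE (p : ℕ) : ℕ := (univ.filter fun i : Fin n => (i : ℕ) < p ∧ i < z i).card
/-- count of deficiencies below p -/
def cntD (p : ℕ) : ℕ := (univ.filter fun i : Fin n => (i : ℕ) < p ∧ z i < i).card

variable {z}
variable (hz2 : z * z = 1)
include hz2

lemma zz (i : Fin n) : z (z i) = i := by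
  have h := congrArg (fun w : Equiv.Perm (Fin n) => w i) hz2
  simpa [Equiv.Perm.mul_apply] using h

lemma cntD_le_cntE (p : ℕ) : cntD z p ≤ cntE z p := by
  apply Finset.card_le_card_of_injOn z
  · intro i hi
    simp only [Finset.mem_coe, mem_filter, mem_univ, true_and] at hi ⊢
    obtain ⟨h1, h2⟩ := hi
    refine ⟨lt_of_lt_of_le (Fin.lt_iff_val_lt_val.1 h2) (le_of_lt h1), ?_⟩
    rw [zz hz2]
    exact h2
  · exact fun a _ b _ h => z.injective h

lemma cntE_lt_of_def {i0 : Fin n} (hi0 : z i0 < i0) :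
    cntD z (i0 : ℕ) + 1 ≤ cntE z (i0 : ℕ) := by
  classical
  have : ((univ.filter fun i : Fin n => ((i : ℕ) < (i0:ℕ) ∧ z i < i) ∨ i = i0)).card
      ≤ cntE z (i0:ℕ) := by
    apply Finset.card_le_card_of_injOn z
    · intro i hi
      simp only [Finset.mem_coe, mem_filter, mem_univ, true_and] at hi ⊢
      rcases hi with ⟨h1, h2⟩ | rfl
      · refine ⟨lt_trans (Fin.lt_iff_val_lt_val.1 h2) h1, ?_⟩
        rw [zz hz2]; exact h2
      · refine ⟨Fin.lt_iff_val_lt_val.1 hi0, ?_⟩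
        rw [zz hz2]; exact hi0
    · exact fun a _ b _ h => z.injective h
  refine le_trans (le_of_eq ?_) this
  rw [Finset.filter_or]
  rw [Finset.card_union_of_disjoint]
  · rw [Finset.filter_eq', if_pos (mem_univ i0)]
    simp [cntD]
  · rw [Finset.disjoint_left]
    intro a ha ha2
    simp only [mem_filter, mem_univ, true_and] at ha ha2
    subst ha2
    exact lt_irrefl _ ha.1

variable (h321 : ¬∃ i j k : Fin n, i < j ∧ j < k ∧ z k < z j ∧ z j < z i)
include h321 hz2

lemma monoE {i j : Fin n} (hij : i < j) (hi : i < z i) (hj : j < z j) : z i < z j := by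
  by_contra hc
  have hne : z j ≠ z i := fun h => (ne_of_lt hij) (z.injective h.symm) |>.elim
  have hlt : z j < z i := lt_of_le_of_ne (not_lt.1 hc) hne
  exact h321 ⟨i, j, z j, hij, hj, by rw [zz hz2]; exact hj, hlt⟩

lemma monoD {i j : Fin n} (hij : i < j) (hi : z i < i) (hj : z j < j) : z i < z j := by
  by_contra hc
  have hne : z j ≠ z i := fun h => (ne_of_lt hij) (z.injective h.symm) |>.elim
  have hlt : z j < z i := lt_of_le_of_ne (not_lt.1 hc) hne
  exact h321 ⟨z i, i, j, hi, hij, hlt, by rw [zz hz2]; exact hi⟩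

lemma no_fix_in_arc {a c : Fin n} (ha : a < z a) (hac : a < c) (hca : c < z a) :
    z c ≠ c := by
  intro hc
  exact h321 ⟨a, c, z a, hac, hca, by rw [zz hz2, hc]; exact hac, by rw [hc]; exact hca⟩

lemma cntE_le_cntD_of_fix {c : Fin n} (hc : z c = c) :
    cntE z (c : ℕ) ≤ cntD z (c : ℕ) := by
  apply Finset.card_le_card_of_injOn z
  · intro i hi
    simp only [Finset.mem_coe, mem_filter, mem_univ, true_and] at hi ⊢
    obtain ⟨h1, h2⟩ := hi
    have hic : i < c := Fin.lt_iff_val_lt_val.2 h1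
    have hzc : z i < c := by
      by_contra hcon
      have hne : z i ≠ c := by
        intro h
        exact (ne_of_lt hic) (z.injective (h.trans hc.symm))
      have : c < z i := lt_of_le_of_ne (not_lt.1 hcon) (Ne.symm hne)
      exact no_fix_in_arc hz2 h321 h2 hic this hc
    exact ⟨hzc, by rw [zz hz2]; exact h2⟩
  · exact fun a _ b _ h => z.injective h

end InvolLemmas

/-- The encoding map. -/
def Phi (n r : ℕ) (z : Equiv.Perm (Fin n)) : Finset ℕ :=
  (Finset.range (n - r)).filter fun j =>
    ∃ h : n - 1 - j < n, ((z ⟨n - 1 - j, h⟩ : Fin n) : ℕ) ≤ n - 1 - j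

section Inj

variable {n r : ℕ} {z z₁ z₂ : Equiv.Perm (Fin n)}

/-- The membership conditions. -/
def Ok (r : ℕ) (z : Equiv.Perm (Fin n)) : Prop :=
  z * z = 1 ∧ (¬∃ i j k : Fin n, i < j ∧ j < k ∧ z k < z j ∧ z j < z i) ∧
    ∀ i : Fin n, (i : ℕ) < r → i < z i

lemma mem_Phi_iff (hn : 0 < n) {i : Fin n} (hi : r ≤ (i : ℕ)) :
    (n - 1 - (i : ℕ)) ∈ Phi n r z ↔ ((z i : ℕ) ≤ (i : ℕ)) := by
  have hival : (i : ℕ) < n := i.isLt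
  have h1 : n - 1 - (n - 1 - (i : ℕ)) = (i : ℕ) := by omega
  have h2 : n - 1 - (i : ℕ) < n - r := by omega
  simp only [Phi, mem_filter, mem_range]
  constructor
  · rintro ⟨-, h, hle⟩
    have : (⟨n - 1 - (n - 1 - (i:ℕ)), h⟩ : Fin n) = i := by
      apply Fin.ext; simp [h1]
    rw [this] at hle
    rw [h1] at hle
    exact hle
  · intro hle
    refine ⟨h2, by omega, ?_⟩
    have : (⟨n - 1 - (n - 1 - (i:ℕ)), by omega⟩ : Fin n) = i := by
      apply Fin.ext; simp [h1]
    rw [this, h1]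
    exact hle

lemma excedance_iff (hn : 0 < n) (h1 : Ok r z₁) (h2 : Ok r z₂)
    (hphi : Phi n r z₁ = Phi n r z₂) : ∀ i : Fin n, i < z₁ i ↔ i < z₂ i := by
  have aux : ∀ (w₁ w₂ : Equiv.Perm (Fin n)), Ok r w₁ → Ok r w₂ →
      Phi n r w₁ = Phi n r w₂ → ∀ i : Fin n, i < w₁ i → i < w₂ i := by
    intro w₁ w₂ hw1 hw2 hp i hlt
    rcases lt_or_ge (i : ℕ) r with hir | hir
    · exact hw2.2.2 i hir
    · have m1 := (mem_Phi_iff (z := w₁) hn hir)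
      have m2 := (mem_Phi_iff (z := w₂) hn hir)
      rw [hp] at m1
      by_contra hc
      have : ((w₂ i : Fin n) : ℕ) ≤ (i : ℕ) := by
        exact not_lt.1 (fun h => hc (Fin.lt_iff_val_lt_val.2 h))
      have hmem := m2.2 this
      have := m1.1 hmem
      exact absurd (Fin.lt_iff_val_lt_val.1 hlt) (not_lt.2 this)
  intro i
  exact ⟨aux z₁ z₂ h1 h2 hphi i, aux z₂ z₁ h2 h1 hphi.symm i⟩

lemma deficiency_iff (hn : 0 < n) (h1 : Ok r z₁) (h2 : Ok r z₂)
    (hphi : Phi n r z₁ = Phi n r z₂) : ∀ i : Fin n, z₁ i < i ↔ z₂ i < i := by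
  have hexc := excedance_iff hn h1 h2 hphi
  have main : ∀ N : ℕ, ∀ i : Fin n, (i : ℕ) = N → (z₁ i < i ↔ z₂ i < i) := by
    intro N
    induction N using Nat.strong_induction_on with
    | _ N ih =>
      intro i hiN
      have hcntD : cntD z₁ (i : ℕ) = cntD z₂ (i : ℕ) := by
        unfold cntD
        congr 1
        apply Finset.filter_congr
        intro x _
        constructor
        · rintro ⟨hx1, hx2⟩; exact ⟨hx1, (ih (x:ℕ) (by omega) x rfl).1 hx2⟩
        · rintro ⟨hx1, hx2⟩; exact ⟨hx1, (ih (x:ℕ) (by omega) x rfl).2 hx2⟩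
      have hcntE : cntE z₁ (i : ℕ) = cntE z₂ (i : ℕ) := by
        unfold cntE
        congr 1
        apply Finset.filter_congr
        intro x _
        constructor
        · rintro ⟨hx1, hx2⟩; exact ⟨hx1, (hexc x).1 hx2⟩
        · rintro ⟨hx1, hx2⟩; exact ⟨hx1, (hexc x).2 hx2⟩
      have aux : ∀ (w₁ w₂ : Equiv.Perm (Fin n)), Ok r w₁ → Ok r w₂ →
          cntD w₁ (i:ℕ) = cntD w₂ (i:ℕ) → cntE w₁ (i:ℕ) = cntE w₂ (i:ℕ) →
          (∀ x : Fin n, x < w₁ x ↔ x < w₂ x) → w₁ i < i → w₂ i < i := by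
        intro w₁ w₂ hw1 hw2 hD hE hex hlt
        rcases lt_trichotomy (w₂ i) i with h | h | h
        · exact h
        · exfalso
          have hle := cntE_le_cntD_of_fix hw2.1 hw2.2.1 h
          have hge := cntE_lt_of_def hw1.1 hlt
          omega
        · exact absurd ((hex i).2 h) (not_lt.2 (le_of_lt hlt))
      exact ⟨aux z₁ z₂ h1 h2 hcntD hcntE hexc, aux z₂ z₁ h2 h1 hcntD.symm hcntE.symm
        (fun x => (hexc x).symm)⟩
  exact fun i => main (i : ℕ) i rfl

lemma phi_injOn (hn : 0 < n) (h1 : Ok r z₁) (h2 : Ok r z₂)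
    (hphi : Phi n r z₁ = Phi n r z₂) : z₁ = z₂ := by
  have hexc := excedance_iff hn h1 h2 hphi
  have hdef := deficiency_iff hn h1 h2 hphi
  set A : Finset (Fin n) := univ.filter fun i => i < z₁ i with hA
  set B : Finset (Fin n) := univ.filter fun i => z₁ i < i with hB
  have hmemA : ∀ i : Fin n, i ∈ A ↔ i < z₁ i := by intro i; simp [hA]
  have hmemB : ∀ i : Fin n, i ∈ B ↔ z₁ i < i := by intro i; simp [hB]
  have hkey : ∀ a ∈ A, z₁ a = z₂ a := by
    apply strictMonoOn_unique A B z₁ z₂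
    · intro a ha
      rw [hmemA] at ha; rw [hmemB, zz h1.1]; exact ha
    · intro a ha
      rw [hmemA] at ha
      rw [hmemB]
      have ha2 : a < z₂ a := (hexc a).1 ha
      have : z₂ (z₂ a) < z₂ a := by rw [zz h2.1]; exact ha2
      exact (hdef (z₂ a)).2 this
    · intro a ha b hb hab
      exact monoE h1.1 h1.2.1 hab ((hmemA a).1 ha) ((hmemA b).1 hb)
    · intro a ha b hb hab
      exact monoE h2.1 h2.2.1 hab ((hexc a).1 ((hmemA a).1 ha)) ((hexc b).1 ((hmemA b).1 hb))
    · intro b hb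
      rw [hmemB] at hb
      refine ⟨z₁ b, ?_, zz h1.1 b⟩
      rw [hmemA, zz h1.1]; exact hb
    · intro b hb
      rw [hmemB] at hb
      have hb2 : z₂ b < b := (hdef b).1 hb
      refine ⟨z₂ b, ?_, zz h2.1 b⟩
      rw [hmemA]
      have : z₂ b < z₂ (z₂ b) := by rw [zz h2.1]; exact hb2
      exact (hexc (z₂ b)).2 this
  apply Equiv.ext
  intro i
  rcases lt_trichotomy (z₁ i) i with h | h | h
  · have hArc : z₁ i ∈ A := by rw [hmemA, zz h1.1]; exact h
    have := hkey (z₁ i) hArc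
    have h2' : z₂ (z₁ i) = i := by rw [← this, zz h1.1]
    have := congrArg z₂ h2'
    rw [zz h2.1] at this
    rw [← this]
  · have hni2 : ¬ z₂ i < i := by rw [← hdef, h]; exact lt_irrefl i
    have hni3 : ¬ i < z₂ i := by rw [← hexc, h]; exact lt_irrefl i
    exact h.trans (le_antisymm (not_lt.1 hni3) (not_lt.1 hni2)).symm
  · exact hkey i ((hmemA i).2 h)

end Inj

section MapsTo

variable {n r : ℕ} {z : Equiv.Perm (Fin n)}

lemma phi_mem_PF (hn : 0 < n) (hr : r ≤ n / 2) (hz : Ok r z) :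
    Phi n r z ∈ PF (n - r) r := by
  obtain ⟨hz2, h321, hlow⟩ := hz
  set m := n - r with hm
  have hmn : m ≤ n := Nat.sub_le _ _
  have hrn : r ≤ n := le_trans hr (Nat.div_le_self _ _)
  rw [mem_PF]
  refine ⟨Finset.filter_subset _ _, ?_, ?_⟩
  · -- prefix condition
    intro t ht
    set cond : ℕ → Prop := fun j =>
      ∃ h : n - 1 - j < n, ((z ⟨n - 1 - j, h⟩ : Fin n) : ℕ) ≤ n - 1 - j with hcond
    have hint : Phi n r z ∩ Finset.range t = (Finset.range t).filter cond := by
      ext j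
      simp only [Phi, hcond, mem_inter, mem_filter, mem_range]
      constructor
      · rintro ⟨⟨h1, h2⟩, h3⟩; exact ⟨h3, h2⟩
      · rintro ⟨h1, h2⟩; exact ⟨⟨by omega, h2⟩, h1⟩
    rw [hint]
    have hsplit := Finset.card_filter_add_card_filter_not
      (s := Finset.range t) (p := cond)
    rw [Finset.card_range] at hsplit
    have hltn : ∀ j : ℕ, n - 1 - j < n := fun j => by omega
    have hle : ((Finset.range t).filter fun j => ¬ cond j).card ≤
        ((Finset.range t).filter cond).card := by
      apply Finset.card_le_card_of_injOn
        (fun j => n - 1 - ((z ⟨n - 1 - j, hltn j⟩ : Fin n) : ℕ))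
      · intro j hj
        simp only [Finset.mem_coe] at hj ⊢
        simp only [Finset.mem_coe, mem_filter, mem_range] at hj
        obtain ⟨hjt, hnc⟩ := hj
        have hjn : j < n := by omega
        set i : Fin n := ⟨n - 1 - j, hltn j⟩ with hi
        have hzi : n - 1 - j < (z i : ℕ) := by
          by_contra hcon
          exact hnc ⟨hltn j, not_lt.1 hcon⟩
        have hzin : (z i : ℕ) < n := (z i).isLt
        simp only [Finset.mem_coe, mem_filter, mem_range]
        refine ⟨by omega, ?_⟩
        refine ⟨hltn _, ?_⟩
        have hieq : (⟨n - 1 - (n - 1 - (z i : ℕ)), hltn _⟩ : Fin n) = z i := by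
          apply Fin.ext
          simp only []
          omega
        rw [hieq, zz hz2]
        have hival : (i : ℕ) = n - 1 - j := rfl
        omega
      · intro j1 hj1 j2 hj2 heq
        simp only [Finset.coe_filter, Set.mem_setOf_eq, mem_range] at hj1 hj2
        have h1 : j1 < n := by omega
        have h2 : j2 < n := by omega
        simp only [] at heq
        have hz1 : ((z ⟨n - 1 - j1, hltn j1⟩ : Fin n) : ℕ) < n := (z _).isLt
        have hz2' : ((z ⟨n - 1 - j2, hltn j2⟩ : Fin n) : ℕ) < n := (z _).isLt
        have heq2 : ((z ⟨n - 1 - j1, hltn j1⟩ : Fin n) : ℕ)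
            = ((z ⟨n - 1 - j2, hltn j2⟩ : Fin n) : ℕ) := by omega
        have heq3 : (⟨n - 1 - j1, hltn j1⟩ : Fin n) = ⟨n - 1 - j2, hltn j2⟩ :=
          z.injective (Fin.ext heq2)
        have heq4 : n - 1 - j1 = n - 1 - j2 := congrArg Fin.val heq3
        omega
    omega
  · -- total condition
    set cond : ℕ → Prop := fun j =>
      ∃ h : n - 1 - j < n, ((z ⟨n - 1 - j, h⟩ : Fin n) : ℕ) ≤ n - 1 - j with hcond
    have hsplit := Finset.card_filter_add_card_filter_not
      (s := Finset.range m) (p := cond)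
    rw [Finset.card_range] at hsplit
    set X := (Finset.range m).filter fun j => ¬ cond j with hX
    set EE : Finset (Fin n) := univ.filter fun i => i < z i with hEE
    set DD : Finset (Fin n) := univ.filter fun i => z i < i with hDD
    have hED : EE.card = DD.card := by
      apply Finset.card_bij (fun i _ => z i)
      · intro a ha
        simp only [hEE, hDD, mem_filter, mem_univ, true_and] at ha ⊢
        rw [zz hz2]; exact ha
      · intro a _ b _ h; exact z.injective h
      · intro b hb
        simp only [hDD, mem_filter, mem_univ, true_and] at hb
        refine ⟨z b, ?_, zz hz2 b⟩
        simp only [hEE, mem_filter, mem_univ, true_and]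
        rw [zz hz2]; exact hb
    have hdisj : Disjoint EE DD := by
      rw [Finset.disjoint_left]
      intro a ha ha2
      simp only [hEE, hDD, mem_filter, mem_univ, true_and] at ha ha2
      exact absurd (lt_trans ha ha2) (lt_irrefl a)
    have hun : EE.card + DD.card ≤ n := by
      rw [← Finset.card_union_of_disjoint hdisj]
      simpa using Finset.card_le_univ (EE ∪ DD)
    have hXr : X.card + r ≤ EE.card := by
      have hcard : (X ∪ Finset.Ico m (m + r)).card = X.card + r := by
        rw [Finset.card_union_of_disjoint, Nat.card_Ico]
        · omega
        · rw [Finset.disjoint_left]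
          intro a ha ha2
          simp only [hX, mem_filter, mem_range] at ha
          simp only [Finset.mem_Ico] at ha2
          omega
      rw [← hcard]
      apply Finset.card_le_card_of_injOn
        (fun j => if h : j < m then (⟨n - 1 - j, by omega⟩ : Fin n) else
          (⟨(j - m) % n, Nat.mod_lt _ hn⟩ : Fin n))
      · intro j hj
        simp only [Finset.mem_coe] at hj ⊢
        simp only [Finset.mem_coe, Finset.mem_union, hX, mem_filter, mem_range, Finset.mem_Ico] at hj
        rcases hj with ⟨hjm, hnc⟩ | ⟨hjm, hjr⟩
        · rw [dif_pos hjm]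
          simp only [Finset.mem_coe, hEE, mem_filter, mem_univ, true_and]
          set i : Fin n := ⟨n - 1 - j, by omega⟩ with hi
          have hzi : n - 1 - j < (z i : ℕ) := by
            by_contra hcon
            exact hnc ⟨by omega, not_lt.1 hcon⟩
          exact Fin.lt_iff_val_lt_val.2 hzi
        · rw [dif_neg (by omega)]
          simp only [Finset.mem_coe, hEE, mem_filter, mem_univ, true_and]
          apply hlow
          show ((j - m) % n) < r
          rw [Nat.mod_eq_of_lt (by omega)]
          omega
      · intro j1 hj1 j2 hj2 heq
        simp only [Finset.coe_union, Set.mem_union, Finset.coe_filter, Set.mem_setOf_eq,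
          mem_range, Finset.coe_Ico, Set.mem_Ico] at hj1 hj2
        simp only [] at heq
        by_cases hc1 : j1 < m <;> by_cases hc2 : j2 < m
        · rw [dif_pos hc1, dif_pos hc2] at heq
          have := congrArg Fin.val heq
          simp only [] at this
          omega
        · have hj2' : j2 < m + r := by
            rcases hj2 with h | h
            · exfalso; rw [hX, Finset.coe_filter] at h
              simp only [Set.mem_setOf_eq, mem_range] at h; omega
            · omega
          rw [dif_pos hc1, dif_neg hc2] at heq
          have := congrArg Fin.val heq
          simp only [] at this
          rw [Nat.mod_eq_of_lt (by omega)] at this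
          omega
        · have hj1' : j1 < m + r := by
            rcases hj1 with h | h
            · exfalso; rw [hX, Finset.coe_filter] at h
              simp only [Set.mem_setOf_eq, mem_range] at h; omega
            · omega
          rw [dif_neg hc1, dif_pos hc2] at heq
          have := congrArg Fin.val heq
          simp only [] at this
          rw [Nat.mod_eq_of_lt (by omega)] at this
          omega
        · have hj1' : j1 < m + r := by
            rcases hj1 with h | h
            · exfalso; rw [hX, Finset.coe_filter] at h
              simp only [Set.mem_setOf_eq, mem_range] at h; omega
            · omega
          have hj2' : j2 < m + r := by
            rcases hj2 with h | h
            · exfalso; rw [hX, Finset.coe_filter] at h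
              simp only [Set.mem_setOf_eq, mem_range] at h; omega
            · omega
          rw [dif_neg hc1, dif_neg hc2] at heq
          have := congrArg Fin.val heq
          simp only [] at this
          rw [Nat.mod_eq_of_lt (by omega), Nat.mod_eq_of_lt (by omega)] at this
          omega
    have hPhiX : (Phi n r z).card + X.card = m := by
      have : (Phi n r z).card = ((Finset.range m).filter cond).card := by
        congr 1
      omega
    omega

end MapsTo


section Helpers

lemma card_filter_fin_le {k : ℕ} (t : Fin k) :
    (univ.filter fun s : Fin k => s ≤ t).card = (t : ℕ) + 1 := by
  have h1 : (univ.filter fun s : Fin k => s ≤ t) = Finset.Iic t := by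
    ext x; simp
  rw [h1, Fin.card_Iic]

lemma card_filter_fin_lt {k : ℕ} (t : Fin k) :
    (univ.filter fun s : Fin k => s < t).card = (t : ℕ) := by
  have h1 : (univ.filter fun s : Fin k => s < t) = Finset.Iio t := by
    ext x; simp
  rw [h1, Fin.card_Iio]

/-- the fundamental counting property of the increasing enumeration -/
lemma orderEmb_lt_iff {n k : ℕ} {s : Finset (Fin n)} (h : s.card = k) (t : Fin k) (p : ℕ) :
    ((s.orderEmbOfFin h t : Fin n) : ℕ) < p ↔
      (t : ℕ) < (s.filter fun x : Fin n => (x : ℕ) < p).card := by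
  constructor
  · intro hlt
    have hle : (univ.filter fun s' : Fin k => s' ≤ t).card ≤
        (s.filter fun x : Fin n => (x : ℕ) < p).card := by
      apply Finset.card_le_card_of_injOn (fun s' => s.orderEmbOfFin h s')
      · intro a ha
        simp only [Finset.mem_coe, mem_filter, mem_univ, true_and] at ha
        simp only [Finset.mem_coe, mem_filter]
        refine ⟨Finset.orderEmbOfFin_mem s h a, ?_⟩
        have : (s.orderEmbOfFin h a : Fin n) ≤ s.orderEmbOfFin h t :=
          (s.orderEmbOfFin h).monotone ha
        exact lt_of_le_of_lt (Fin.le_iff_val_le_val.1 this) hlt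
      · intro a _ b _ hab
        exact (s.orderEmbOfFin h).injective hab
    rw [card_filter_fin_le] at hle
    omega
  · intro hlt
    by_contra hcon
    have hple : p ≤ ((s.orderEmbOfFin h t : Fin n) : ℕ) := not_lt.1 hcon
    have hle : (s.filter fun x : Fin n => (x : ℕ) < p).card ≤
        (univ.filter fun s' : Fin k => s' < t).card := by
      have hmemk : ∀ x ∈ s.filter (fun x : Fin n => (x : ℕ) < p),
          ∃ t' : Fin k, s.orderEmbOfFin h t' = x := by
        intro x hx
        simp only [mem_filter] at hx
        have : x ∈ Set.range (s.orderEmbOfFin h) := by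
          rw [Finset.range_orderEmbOfFin]
          exact hx.1
        exact this
      apply Finset.card_le_card_of_injOn
        (fun x => if hx : ∃ t' : Fin k, s.orderEmbOfFin h t' = x then hx.choose else t)
      · intro x hx
        simp only [Finset.mem_coe] at hx ⊢
        rw [dif_pos (hmemk x hx)]
        simp only [mem_filter, mem_univ, true_and]
        set t' := (hmemk x hx).choose with ht'
        have hspec : s.orderEmbOfFin h t' = x := (hmemk x hx).choose_spec
        simp only [mem_filter] at hx
        by_contra hge
        have : t ≤ t' := not_lt.1 hge
        have : (s.orderEmbOfFin h t : Fin n) ≤ s.orderEmbOfFin h t' :=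
          (s.orderEmbOfFin h).monotone this
        rw [hspec] at this
        have := Fin.le_iff_val_le_val.1 this
        omega
      · intro x hx y hy hxy
        rw [Finset.mem_coe] at hx hy
        simp only [] at hxy
        rw [dif_pos (hmemk x hx), dif_pos (hmemk y hy)] at hxy
        have hx1 : s.orderEmbOfFin h (hmemk x hx).choose = x := (hmemk x hx).choose_spec
        have hy1 : s.orderEmbOfFin h (hmemk y hy).choose = y := (hmemk y hy).choose_spec
        rw [← hx1, ← hy1, hxy]
    rw [card_filter_fin_lt] at hle
    omega

end Helpers

section Constr

variable (n : ℕ) (S' : Finset ℕ)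

/-- positions that are "openers" -/
def upc (x : ℕ) : Prop := n - 1 - x ∉ S'

instance : DecidablePred (upc n S') := fun x => by unfold upc; infer_instance

/-- the height function -/
def hgt : ℕ → ℕ
  | 0 => 0
  | p + 1 => if upc n S' p then hgt p + 1 else hgt p - 1

/-- positions that are "closers" -/
def dnc (x : ℕ) : Prop := ¬ upc n S' x ∧ 0 < hgt n S' x

instance : DecidablePred (dnc n S') := fun x => by unfold dnc; infer_instance

lemma hgt_succ (p : ℕ) :
    hgt n S' (p + 1) = if upc n S' p then hgt n S' p + 1 else hgt n S' p - 1 := rfl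

lemma hgt_sum : ∀ p q : ℕ, p ≤ q →
    hgt n S' q + ((Finset.Ico p q).filter (dnc n S')).card
      = hgt n S' p + ((Finset.Ico p q).filter (upc n S')).card := by
  intro p q hpq
  induction q, hpq using Nat.le_induction with
  | base => simp
  | succ q hpq ih =>
    rw [show Finset.Ico p (q+1) = insert q (Finset.Ico p q) from
      Nat.Ico_succ_right_eq_insert_Ico hpq]
    rw [Finset.filter_insert, Finset.filter_insert, hgt_succ]
    have hq : q ∉ Finset.Ico p q := by simp
    by_cases hu : upc n S' q
    · rw [if_pos hu, if_pos hu, if_neg (fun hd => hd.1 hu)]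
      rw [Finset.card_insert_of_notMem (fun hc => hq (Finset.mem_of_mem_filter q hc))]
      omega
    · rw [if_neg hu, if_neg hu]
      by_cases hh : 0 < hgt n S' q
      · rw [if_pos ⟨hu, hh⟩]
        rw [Finset.card_insert_of_notMem (fun hc => hq (Finset.mem_of_mem_filter q hc))]
        omega
      · rw [if_neg (fun hd => hh hd.2)]
        omega

lemma hgt_count (p : ℕ) :
    hgt n S' p + ((Finset.range p).filter (dnc n S')).card
      = ((Finset.range p).filter (upc n S')).card := by
  have h2 := hgt_sum n S' 0 p (Nat.zero_le p)
  rw [show hgt n S' 0 = 0 from rfl] at h2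
  rw [Finset.range_eq_Ico]
  omega

lemma hgt_low {r : ℕ} (hrn : r ≤ n) (hsub : S' ⊆ Finset.range (n - r)) :
    ∀ p, p ≤ r → hgt n S' p = p := by
  intro p
  induction p with
  | zero => intro; rfl
  | succ p ih =>
    intro hp
    have hup : upc n S' p := by
      intro hc
      have := hsub hc
      simp only [Finset.mem_range] at this
      omega
    rw [hgt_succ, if_pos hup, ih (by omega)]

lemma hgt_top {r : ℕ} (hn : 0 < n) (hr : r ≤ n / 2) (hS' : S' ∈ PF (n - r) r) :
    hgt n S' n = 0 := by
  obtain ⟨hsub, hpre, htot⟩ := mem_PF.1 hS'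
  have hrn : r ≤ n := le_trans hr (Nat.div_le_self _ _)
  set m := n - r with hm
  set T := (Finset.range (n+1)).filter (fun p => hgt n S' p = 0) with hT
  have hT0 : (0 : ℕ) ∈ T := by
    simp only [hT, mem_filter, mem_range]
    exact ⟨by omega, rfl⟩
  have hTne : T.Nonempty := ⟨0, hT0⟩
  set ts := T.max' hTne with hts
  have htsmem : ts ∈ T := T.max'_mem hTne
  have htszero : hgt n S' ts = 0 := by
    have := htsmem; simp only [hT, mem_filter] at this; exact this.2
  have htsn : ts ≤ n := by
    have := htsmem; simp only [hT, mem_filter, mem_range] at this; omega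
  have claim1 : ∀ p, ts < p → p ≤ n → hgt n S' p ≠ 0 := by
    intro p h1 h2 h3
    have hp : p ∈ T := by simp only [hT, mem_filter, mem_range]; exact ⟨by omega, h3⟩
    have := T.le_max' p hp
    omega
  have claim2 : ∀ p, ts ≤ p → p < n → ¬ upc n S' p → 0 < hgt n S' p := by
    intro p h1 h2 h3
    rcases lt_or_eq_of_le h1 with h | h
    · exact Nat.pos_of_ne_zero (claim1 p h (by omega))
    · by_contra hcon
      have h0 : hgt n S' p = 0 := by omega
      have h4 : hgt n S' (p+1) = 0 := by
        rw [hgt_succ, if_neg h3]; omega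
      exact claim1 (p+1) (by omega) (by omega) h4
  have hfeq : (Finset.Ico ts n).filter (dnc n S') =
      (Finset.Ico ts n).filter (fun x => ¬ upc n S' x) := by
    apply Finset.filter_congr
    intro x hx
    simp only [Finset.mem_Ico] at hx
    constructor
    · intro hd; exact hd.1
    · intro hu
      exact ⟨hu, claim2 x hx.1 hx.2 hu⟩
  have hsum := hgt_sum n S' ts n htsn
  rw [hfeq, htszero] at hsum
  have hcardsplit := Finset.card_filter_add_card_filter_not
    (s := Finset.Ico ts n) (p := upc n S')
  rw [Nat.card_Ico] at hcardsplit
  rcases le_or_gt r ts with hge | hlt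
  · -- use prefix condition at t = n - ts
    have hprem := hpre (n - ts) (by omega)
    have hbij : (S' ∩ Finset.range (n - ts)).card =
        ((Finset.Ico ts n).filter fun x => ¬ upc n S' x).card := by
      apply Finset.card_bij (fun j _ => n - 1 - j)
      · intro j hj
        simp only [mem_inter, mem_range] at hj
        obtain ⟨hj1, hj2⟩ := hj
        have hjm : j < m := by have := hsub hj1; simpa using this
        simp only [mem_filter, Finset.mem_Ico]
        refine ⟨⟨by omega, by omega⟩, ?_⟩
        unfold upc
        rw [show n - 1 - (n - 1 - j) = j by omega]
        simp [hj1]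
      · intro j1 hj1 j2 hj2 heq
        simp only [mem_inter, mem_range] at hj1 hj2
        omega
      · intro p hp
        simp only [mem_filter, Finset.mem_Ico] at hp
        obtain ⟨⟨hp1, hp2⟩, hp3⟩ := hp
        unfold upc at hp3
        rw [not_not] at hp3
        refine ⟨n - 1 - p, ?_, by omega⟩
        simp only [mem_inter, mem_range]
        exact ⟨hp3, by omega⟩
    omega
  · -- ts < r : then ts = 0
    have hts0 : ts = 0 := by
      have := hgt_low n S' hrn hsub ts (by omega)
      omega
    rw [hts0] at hsum hcardsplit
    have hbij2 : S'.card = ((Finset.Ico 0 n).filter fun x => ¬ upc n S' x).card := by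
      apply Finset.card_bij (fun j _ => n - 1 - j)
      · intro j hj
        have hjm : j < m := by have := hsub hj; simpa using this
        simp only [mem_filter, Finset.mem_Ico]
        refine ⟨⟨by omega, by omega⟩, ?_⟩
        unfold upc
        rw [show n - 1 - (n - 1 - j) = j by omega]
        simp [hj]
      · intro j1 hj1 j2 hj2 heq
        have h1 : j1 < m := by have := hsub hj1; simpa using this
        have h2 : j2 < m := by have := hsub hj2; simpa using this
        omega
      · intro p hp
        simp only [mem_filter, Finset.mem_Ico] at hp
        obtain ⟨⟨hp1, hp2⟩, hp3⟩ := hp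
        unfold upc at hp3
        rw [not_not] at hp3
        exact ⟨n - 1 - p, hp3, by omega⟩
    omega

lemma phi_surj {r : ℕ} (hn : 0 < n) (hr : r ≤ n / 2)
    (hS' : S' ∈ PF (n - r) r) : ∃ z : Equiv.Perm (Fin n), Ok r z ∧ Phi n r z = S' := by
  classical
  obtain ⟨hsub, hpre, htot⟩ := mem_PF.1 hS'
  have hrn : r ≤ n := le_trans hr (Nat.div_le_self _ _)
  set E : Finset (Fin n) := univ.filter (fun i : Fin n => upc n S' ↑i) with hE
  set D : Finset (Fin n) := univ.filter (fun i : Fin n => dnc n S' ↑i) with hD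
  have htrE : ∀ p, p ≤ n → (E.filter fun x : Fin n => (x:ℕ) < p).card
      = ((Finset.range p).filter (upc n S')).card := by
    intro p hp
    apply Finset.card_bij (fun (x : Fin n) (_ : x ∈ E.filter fun x : Fin n => (x:ℕ) < p) => (x : ℕ))
    · intro a ha
      simp only [hE, mem_filter, mem_univ, true_and] at ha
      simp only [mem_filter, mem_range]
      exact ⟨ha.2, ha.1⟩
    · intro a _ b _ hab; exact Fin.ext hab
    · intro b hb
      simp only [mem_filter, mem_range] at hb
      refine ⟨⟨b, by omega⟩, ?_, rfl⟩
      simp only [hE, mem_filter, mem_univ, true_and]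
      exact ⟨hb.2, hb.1⟩
  have htrD : ∀ p, p ≤ n → (D.filter fun x : Fin n => (x:ℕ) < p).card
      = ((Finset.range p).filter (dnc n S')).card := by
    intro p hp
    apply Finset.card_bij (fun (x : Fin n) (_ : x ∈ D.filter fun x : Fin n => (x:ℕ) < p) => (x : ℕ))
    · intro a ha
      simp only [hD, mem_filter, mem_univ, true_and] at ha
      simp only [mem_filter, mem_range]
      exact ⟨ha.2, ha.1⟩
    · intro a _ b _ hab; exact Fin.ext hab
    · intro b hb
      simp only [mem_filter, mem_range] at hb
      refine ⟨⟨b, by omega⟩, ?_, rfl⟩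
      simp only [hD, mem_filter, mem_univ, true_and]
      exact ⟨hb.2, hb.1⟩
  have hEfull : E.filter (fun x : Fin n => (x:ℕ) < n) = E := by
    apply Finset.filter_true_of_mem
    intro x _; exact x.isLt
  have hDfull : D.filter (fun x : Fin n => (x:ℕ) < n) = D := by
    apply Finset.filter_true_of_mem
    intro x _; exact x.isLt
  have hcntn := hgt_count n S' n
  rw [hgt_top n S' hn hr hS'] at hcntn
  have hED : D.card = E.card := by
    have h1 := htrE n le_rfl
    have h2 := htrD n le_rfl
    rw [hEfull] at h1
    rw [hDfull] at h2
    omega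
  set k := E.card with hk
  have hkE : E.card = k := rfl
  have hkD : D.card = k := hED
  set eE := E.orderEmbOfFin hkE with heE
  set eD := D.orderEmbOfFin hkD with heD
  set oE := E.orderIsoOfFin hkE with hoE
  set oD := D.orderIsoOfFin hkD with hoD
  have hcoeE : ∀ t : Fin k, ((oE t : Fin n)) = eE t := fun t => rfl
  have hcoeD : ∀ t : Fin k, ((oD t : Fin n)) = eD t := fun t => rfl
  have hprefix : ∀ p, p ≤ n →
      (D.filter fun x : Fin n => (x:ℕ) < p).card ≤
        (E.filter fun x : Fin n => (x:ℕ) < p).card := by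
    intro p hp
    rw [htrE p hp, htrD p hp]
    have := hgt_count n S' p
    omega
  -- K1 : arcs go up
  have hK1 : ∀ t : Fin k, ((eE t : Fin n) : ℕ) < ((eD t : Fin n) : ℕ) := by
    intro t
    have h1 : ((eD t : Fin n) : ℕ) < ((eD t : Fin n) : ℕ) + 1 := Nat.lt_succ_self _
    have h2 : (t : ℕ) < (D.filter fun x : Fin n => (x:ℕ) < ((eD t : Fin n) : ℕ) + 1).card := by
      rw [← orderEmb_lt_iff hkD t]
      exact h1
    have h3 : (t : ℕ) < (E.filter fun x : Fin n => (x:ℕ) < ((eD t : Fin n) : ℕ) + 1).card :=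
      lt_of_lt_of_le h2 (hprefix _ (by have := (eD t).isLt; omega))
    have h4 : ((eE t : Fin n) : ℕ) < ((eD t : Fin n) : ℕ) + 1 :=
      (orderEmb_lt_iff hkE t _).2 h3
    have hne : ((eE t : Fin n) : ℕ) ≠ ((eD t : Fin n) : ℕ) := by
      intro hc
      have hmE : (eE t : Fin n) ∈ E := Finset.orderEmbOfFin_mem E hkE t
      have hmD : (eD t : Fin n) ∈ D := Finset.orderEmbOfFin_mem D hkD t
      simp only [hE, hD, mem_filter, mem_univ, true_and] at hmE hmD
      rw [hc] at hmE
      exact hmD.1 hmE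
    omega
  -- K2 : no fixed point inside an arc
  have hK2 : ∀ (t : Fin k) (c : Fin n), ¬ upc n S' ↑c → ¬ dnc n S' ↑c →
      ¬(((eE t : Fin n) : ℕ) < (c : ℕ) ∧ (c : ℕ) < ((eD t : Fin n) : ℕ)) := by
    rintro t c hcu hcd ⟨h1, h2⟩
    have hhgt : hgt n S' (c : ℕ) = 0 := by
      by_contra hcon
      exact hcd ⟨hcu, Nat.pos_of_ne_zero hcon⟩
    have hcc : ((Finset.range (c:ℕ)).filter (dnc n S')).card
        = ((Finset.range (c:ℕ)).filter (upc n S')).card := by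
      have := hgt_count n S' (c : ℕ)
      omega
    have hcn : (c : ℕ) ≤ n := le_of_lt c.isLt
    have ht1 : (t : ℕ) < (E.filter fun x : Fin n => (x:ℕ) < (c:ℕ)).card :=
      (orderEmb_lt_iff hkE t _).1 h1
    have ht2 : ¬ ((t : ℕ) < (D.filter fun x : Fin n => (x:ℕ) < (c:ℕ) + 1).card) := by
      rw [← orderEmb_lt_iff hkD t, ← heD]
      omega
    have hstep : ((Finset.range ((c:ℕ)+1)).filter (dnc n S')).card
        = ((Finset.range (c:ℕ)).filter (dnc n S')).card := by
      rw [Finset.range_add_one, Finset.filter_insert, if_neg hcd]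
    rw [htrD _ (by omega), hstep] at ht2
    rw [htrE _ hcn] at ht1
    omega
  -- define the involution
  set f : Fin n → Fin n := fun i =>
    if hi : i ∈ E then eD (oE.symm ⟨i, hi⟩)
    else if hi2 : i ∈ D then eE (oD.symm ⟨i, hi2⟩)
    else i with hf
  have hdisjED : ∀ i : Fin n, i ∈ E → i ∈ D → False := by
    intro i hiE hiD
    simp only [hE, hD, mem_filter, mem_univ, true_and] at hiE hiD
    exact hiD.1 hiE
  have hfE : ∀ (i : Fin n) (hi : i ∈ E), f i = eD (oE.symm ⟨i, hi⟩) := by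
    intro i hi; simp only [hf]; rw [dif_pos hi]
  have hfD : ∀ (i : Fin n) (hi : i ∈ D), f i = eE (oD.symm ⟨i, hi⟩) := by
    intro i hi
    simp only [hf]
    rw [dif_neg (fun hc => hdisjED i hc hi), dif_pos hi]
  have hfF : ∀ i : Fin n, i ∉ E → i ∉ D → f i = i := by
    intro i h1 h2
    simp only [hf]
    rw [dif_neg h1, dif_neg h2]
  have hEapp : ∀ (i : Fin n) (hi : i ∈ E), eE (oE.symm ⟨i, hi⟩) = i := by
    intro i hi
    have : (oE (oE.symm ⟨i, hi⟩) : Fin n) = ((⟨i, hi⟩ : {x // x ∈ E}) : Fin n) := by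
      rw [OrderIso.apply_symm_apply]
    rw [← hcoeE]
    exact this
  have hDapp : ∀ (i : Fin n) (hi : i ∈ D), eD (oD.symm ⟨i, hi⟩) = i := by
    intro i hi
    have : (oD (oD.symm ⟨i, hi⟩) : Fin n) = ((⟨i, hi⟩ : {x // x ∈ D}) : Fin n) := by
      rw [OrderIso.apply_symm_apply]
    rw [← hcoeD]
    exact this
  have hmemED : ∀ t : Fin k, eD t ∈ D := fun t => Finset.orderEmbOfFin_mem D hkD t
  have hmemEE : ∀ t : Fin k, eE t ∈ E := fun t => Finset.orderEmbOfFin_mem E hkE t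
  have hsymmD : ∀ t : Fin k, oD.symm ⟨eD t, hmemED t⟩ = t := by
    intro t
    have h1 : (⟨eD t, hmemED t⟩ : {x // x ∈ D}) = oD t := by
      apply Subtype.ext
      rw [hcoeD]
    rw [h1, OrderIso.symm_apply_apply]
  have hsymmE : ∀ t : Fin k, oE.symm ⟨eE t, hmemEE t⟩ = t := by
    intro t
    have h1 : (⟨eE t, hmemEE t⟩ : {x // x ∈ E}) = oE t := by
      apply Subtype.ext
      rw [hcoeE]
    rw [h1, OrderIso.symm_apply_apply]
  have hinv : Function.Involutive f := by
    intro i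
    by_cases hi : i ∈ E
    · rw [hfE i hi]
      have hmem : eD (oE.symm ⟨i, hi⟩) ∈ D := hmemED _
      rw [hfD _ hmem]
      rw [hsymmD]
      exact hEapp i hi
    · by_cases hi2 : i ∈ D
      · rw [hfD i hi2]
        have hmem : eE (oD.symm ⟨i, hi2⟩) ∈ E := hmemEE _
        rw [hfE _ hmem]
        rw [hsymmE]
        exact hDapp i hi2
      · rw [hfF i hi hi2, hfF i hi hi2]
  set z : Equiv.Perm (Fin n) := hinv.toPerm with hz
  have hzap : ∀ i, z i = f i := fun i => rfl
  -- basic behaviour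
  have hzE : ∀ (i : Fin n), i ∈ E → i < z i ∧ z i ∈ D := by
    intro i hi
    rw [hzap, hfE i hi]
    set t := oE.symm ⟨i, hi⟩
    have h1 : eE t = i := hEapp i hi
    refine ⟨?_, hmemED t⟩
    rw [← h1]
    exact Fin.lt_iff_val_lt_val.2 (hK1 t)
  have hzD : ∀ (i : Fin n), i ∈ D → z i < i ∧ z i ∈ E := by
    intro i hi
    rw [hzap, hfD i hi]
    set t := oD.symm ⟨i, hi⟩
    have h1 : eD t = i := hDapp i hi
    refine ⟨?_, hmemEE t⟩
    rw [← h1]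
    exact Fin.lt_iff_val_lt_val.2 (hK1 t)
  have hzF : ∀ i : Fin n, i ∉ E → i ∉ D → z i = i := by
    intro i h1 h2; rw [hzap, hfF i h1 h2]
  have hexE : ∀ i : Fin n, i < z i ↔ i ∈ E := by
    intro i
    constructor
    · intro h
      by_contra hiE
      by_cases hiD : i ∈ D
      · exact absurd ((hzD i hiD).1) (not_lt.2 (le_of_lt h))
      · rw [hzF i hiE hiD] at h; exact lt_irrefl i h
    · intro h; exact (hzE i h).1
  have hdefD : ∀ i : Fin n, z i < i ↔ i ∈ D := by
    intro i
    constructor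
    · intro h
      by_contra hiD
      by_cases hiE : i ∈ E
      · exact absurd ((hzE i hiE).1) (not_lt.2 (le_of_lt h))
      · rw [hzF i hiE hiD] at h; exact lt_irrefl i h
    · intro h; exact (hzD i h).1
  have hmonoE : ∀ i1 i2 : Fin n, i1 ∈ E → i2 ∈ E → i1 < i2 → z i1 < z i2 := by
    intro i1 i2 h1 h2 h12
    rw [hzap, hzap, hfE i1 h1, hfE i2 h2]
    apply (eD : Fin k ↪o Fin n).strictMono
    apply (OrderIso.symm oE).strictMono
    exact Subtype.mk_lt_mk.2 h12
  have hmonoD : ∀ i1 i2 : Fin n, i1 ∈ D → i2 ∈ D → i1 < i2 → z i1 < z i2 := by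
    intro i1 i2 h1 h2 h12
    rw [hzap, hzap, hfD i1 h1, hfD i2 h2]
    apply (eE : Fin k ↪o Fin n).strictMono
    apply (OrderIso.symm oD).strictMono
    exact Subtype.mk_lt_mk.2 h12
  refine ⟨z, ⟨?_, ?_, ?_⟩, ?_⟩
  · -- involution
    apply Equiv.ext
    intro i
    rw [Equiv.Perm.mul_apply, Equiv.Perm.one_apply, hzap, hzap]
    exact hinv i
  · -- 321-avoiding
    rintro ⟨i, j, kk, hij, hjk, h1, h2⟩
    have hiE : i ∈ E := by
      by_contra hiE
      by_cases hiD : i ∈ D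
      · have hzi : z i < i := (hzD i hiD).1
        have hjD : j ∈ D := (hdefD j).1 (lt_trans h2 (lt_trans hzi hij))
        exact absurd (hmonoD i j hiD hjD hij) (not_lt.2 (le_of_lt h2))
      · have hzi : z i = i := hzF i hiE hiD
        rw [hzi] at h2
        have hjD : j ∈ D := (hdefD j).1 (lt_trans h2 hij)
        have hkD : kk ∈ D := (hdefD kk).1 (lt_trans h1 (lt_trans ((hzD j hjD).1) hjk))
        exact absurd (hmonoD j kk hjD hkD hjk) (not_lt.2 (le_of_lt h1))
    have hkkD : kk ∈ D := by
      by_contra hkD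
      by_cases hkE : kk ∈ E
      · have hzk : kk < z kk := (hzE kk hkE).1
        have hjE : j ∈ E := (hexE j).1 (lt_trans hjk (lt_trans hzk h1))
        exact absurd (hmonoE i j hiE hjE hij) (not_lt.2 (le_of_lt h2))
      · have hzk : z kk = kk := hzF kk hkE hkD
        rw [hzk] at h1
        have hjE : j ∈ E := (hexE j).1 (lt_trans hjk h1)
        exact absurd (hmonoE i j hiE hjE hij) (not_lt.2 (le_of_lt h2))
    have hjE : j ∉ E := by
      intro hjE
      exact absurd (hmonoE i j hiE hjE hij) (not_lt.2 (le_of_lt h2))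
    have hjD : j ∉ D := by
      intro hjD
      exact absurd (hmonoD j kk hjD hkkD hjk) (not_lt.2 (le_of_lt h1))
    have hzj : z j = j := hzF j hjE hjD
    -- now i ∈ E, z j = j, j < z i : contradiction with hK2
    set t := oE.symm ⟨i, hiE⟩ with hT
    have hti : eE t = i := hEapp i hiE
    have htd : eD t = z i := by rw [hzap, hfE i hiE]
    apply hK2 t j ?_ ?_
    · constructor
      · rw [hti]; exact Fin.lt_iff_val_lt_val.1 hij
      · rw [htd]
        have : j < z i := by rw [← hzj]; exact h2
        exact Fin.lt_iff_val_lt_val.1 this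
    · intro hup
      exact hjE (by simp only [hE, mem_filter, mem_univ, true_and]; exact hup)
    · intro hdn
      exact hjD (by simp only [hD, mem_filter, mem_univ, true_and]; exact hdn)
  · -- low excedances
    intro i hi
    have hiE : i ∈ E := by
      simp only [hE, mem_filter, mem_univ, true_and]
      intro hc
      have := hsub hc
      simp only [mem_range] at this
      have hin : (i : ℕ) < n := i.isLt
      omega
    exact (hzE i hiE).1
  · -- Phi z = S'
    ext j
    simp only [Phi, mem_filter, mem_range]
    constructor
    · rintro ⟨hjm, hlt, hle⟩
      set i : Fin n := ⟨n - 1 - j, hlt⟩ with hi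
      have hiNotE : i ∉ E := by
        intro hiE
        have := (hzE i hiE).1
        have hv := Fin.lt_iff_val_lt_val.1 this
        simp only [hi] at hv hle
        omega
      simp only [hE, mem_filter, mem_univ, true_and] at hiNotE
      unfold upc at hiNotE
      rw [not_not] at hiNotE
      rw [show n - 1 - ((i : ℕ)) = j by simp only [hi]; omega] at hiNotE
      exact hiNotE
    · intro hjS
      have hjm : j < n - r := by have := hsub hjS; simpa using this
      refine ⟨hjm, by omega, ?_⟩
      set i : Fin n := ⟨n - 1 - j, by omega⟩ with hi
      have hiNotE : i ∉ E := by
        simp only [hE, mem_filter, mem_univ, true_and]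
        unfold upc
        rw [not_not, show n - 1 - ((i : ℕ)) = j by simp only [hi]; omega]
        exact hjS
      by_cases hiD : i ∈ D
      · exact le_of_lt (Fin.lt_iff_val_lt_val.1 (hzD i hiD).1)
      · rw [hzF i hiNotE hiD]

end Constr

end Stmt14

/-- For `0 ≤ r ≤ ⌊n/2⌋`, the number of 321-avoiding involutions `z` in
`S_n` satisfying `z(i) > i` for all `i ∈ [r]` (here `S_n` acts on `Fin n`, so the
condition reads `z(i) > i` for the first `r` points) equals `C(n - r, ⌈n/2⌉)`. -/
theorem stmt_14 (n r : ℕ) (hr : r ≤ n / 2) :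
    {z : Equiv.Perm (Fin n) | z * z = 1 ∧
      (¬∃ i j k : Fin n, i < j ∧ j < k ∧ z k < z j ∧ z j < z i) ∧
      (∀ i : Fin n, (i : ℕ) < r → i < z i)}.ncard
    = Nat.choose (n - r) ((n + 1) / 2) := by
  classical
  rcases Nat.eq_zero_or_pos n with rfl | hn
  · have hr0 : r = 0 := by omega
    subst hr0
    have hset : {z : Equiv.Perm (Fin 0) | z * z = 1 ∧
        (¬∃ i j k : Fin 0, i < j ∧ j < k ∧ z k < z j ∧ z j < z i) ∧
        (∀ i : Fin 0, (i : ℕ) < 0 → i < z i)} = Set.univ := by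
      apply Set.eq_univ_of_forall
      intro z
      refine ⟨?_, ?_, ?_⟩
      · apply Equiv.ext; intro i; exact i.elim0
      · rintro ⟨i, -⟩; exact i.elim0
      · intro i; exact i.elim0
    rw [hset, Set.ncard_univ, Nat.card_eq_fintype_card]
    simp
  · have hset : {z : Equiv.Perm (Fin n) | z * z = 1 ∧
        (¬∃ i j k : Fin n, i < j ∧ j < k ∧ z k < z j ∧ z j < z i) ∧
        (∀ i : Fin n, (i : ℕ) < r → i < z i)} = setOf (Stmt14.Ok r) := rfl
    rw [hset]
    have hinj : Set.InjOn (Stmt14.Phi n r) (setOf (Stmt14.Ok r)) :=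
      fun z₁ h1 z₂ h2 h => Stmt14.phi_injOn hn h1 h2 h
    have him : Stmt14.Phi n r '' setOf (Stmt14.Ok r) = ↑(Stmt14.PF (n - r) r) := by
      apply Set.Subset.antisymm
      · rintro x ⟨z, hz, rfl⟩
        exact Finset.mem_coe.2 (Stmt14.phi_mem_PF hn hr hz)
      · intro x hx
        obtain ⟨z, hOk, hPhi⟩ := Stmt14.phi_surj n x hn hr (Finset.mem_coe.1 hx)
        exact ⟨z, hOk, hPhi⟩
    rw [← Set.ncard_image_of_injOn hinj, him, Set.ncard_coe_finset, Stmt14.card_PF]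
    congr 1
    omega
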